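/- arXiv:2108.05327 — 3 statements merged into one kernel-verified Lean document; each statement's English description precedes it below -/
import Mathlib

section
/- Let K be a number field, p a prime, and suppose that for some residual degree κ the number of distinct prime ideals of 𝒪_K above p with residual degree κ exceeds the number of monic irreducible polynomials of degree κ over 𝔽_p. Then for every algebraic integer α ∈ 𝒪_K, the prime p divides the index [𝒪_K : ℤ[α]] (where the index is taken to be divisible by p if α does not generate K). In particular p divides disc(minpoly α)/d_K for every generator α. -/
set_option maxHeartbeats 1000000
set_option synthInstance.maxHeartbeats 400000

open NumberField Polynomial

/-- The minimal polynomial over `ZMod p` of the residue of `x` modulo `P`,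
when the quotient has characteristic `p` (junk value `0` otherwise). -/
noncomputable def resPoly (p : ℕ) {R : Type*} [CommRing R] (P : Ideal R) (x : R) :
    (ZMod p)[X] := by
  classical
  exact if h : CharP (R ⧸ P) p then
    letI := h
    letI := ZMod.algebra (R ⧸ P) p
    minpoly (ZMod p) (Ideal.Quotient.mk P x)
  else 0

theorem resPoly_def (p : ℕ) {R : Type*} [CommRing R] (P : Ideal R) (x : R)
    [hc : CharP (R ⧸ P) p] [inst : Algebra (ZMod p) (R ⧸ P)] :
    resPoly p P x = minpoly (ZMod p) (Ideal.Quotient.mk P x) := by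
  rw [resPoly, dif_pos hc]
  exact congrArg (fun a : Algebra (ZMod p) (R ⧸ P) =>
    @minpoly (ZMod p) (R ⧸ P) _ _ a (Ideal.Quotient.mk P x)) (Subsingleton.elim _ _)

/-- In a finite field `F` of cardinality `p ^ κ`, the minimal polynomial of a generator
is monic irreducible of degree `κ`. -/
theorem minpoly_spec (p κ : ℕ) [Fact p.Prime] (F : Type*) [Field F] [Finite F]
    [Algebra (ZMod p) F] (hcard : Nat.card F = p ^ κ) (x : F)
    (hx : Algebra.adjoin (ZMod p) {x} = ⊤) :
    (minpoly (ZMod p) x).Monic ∧ Irreducible (minpoly (ZMod p) x) ∧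
      (minpoly (ZMod p) x).natDegree = κ := by
  haveI : Module.Finite (ZMod p) F := Module.Finite.of_finite
  have hint : IsIntegral (ZMod p) x := IsIntegral.of_finite (ZMod p) x
  refine ⟨minpoly.monic hint, minpoly.irreducible hint, ?_⟩
  -- the intermediate field generated by `x` is everything
  have htop : (IntermediateField.adjoin (ZMod p) {x}) = ⊤ := by
    apply IntermediateField.toSubalgebra_injective
    rw [IntermediateField.top_toSubalgebra]
    exact top_le_iff.mp (hx.symm.trans_le (IntermediateField.algebra_adjoin_le_adjoin _ _))
  have hfr : Module.finrank (ZMod p) F = κ := by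
    letI : Fintype F := Fintype.ofFinite F
    have := Module.card_eq_pow_finrank (K := ZMod p) (V := F)
    rw [ZMod.card, ← Nat.card_eq_fintype_card, hcard] at this
    exact (Nat.pow_right_injective (Fact.out : p.Prime).two_le this.symm)
  have := IntermediateField.adjoin.finrank hint
  rw [htop, IntermediateField.finrank_top', hfr] at this
  exact this.symm

/-- If for some residual degree `κ` the number of distinct primes of `𝒪_K` above `p`
with residual degree `κ` exceeds the number of monic irreducible polynomials of degree
`κ` over `𝔽_p`, then `p` divides the index `[𝒪_K : ℤ[α]]` for every `α ∈ 𝒪_K`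
(the index being `0`, hence divisible by `p`, when `ℤ[α]` has infinite index). -/
theorem common_index_divisor_of_too_many_primes
    (K : Type*) [Field K] [NumberField K] (p κ : ℕ) (hp : p.Prime) (hκ : 0 < κ)
    (h : Nat.card {f : (ZMod p)[X] // f.Monic ∧ Irreducible f ∧ f.natDegree = κ}
        < Nat.card {P : Ideal (𝓞 K) //
            P.IsPrime ∧ (p : 𝓞 K) ∈ P ∧ Ideal.absNorm P = p ^ κ}) :
    ∀ α : 𝓞 K, p ∣ ((Algebra.adjoin ℤ {α}).toSubring.toAddSubgroup.index) := by
  intro α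
  by_contra hdvd
  haveI : Fact p.Prime := ⟨hp⟩
  haveI : NeZero p := ⟨hp.ne_zero⟩
  set A := Algebra.adjoin ℤ {α} with hA
  set G := A.toSubring.toAddSubgroup with hG
  -- Step 1: 𝒪_K = ℤ[α] + p·𝒪_K
  have hsur : ∀ z : 𝓞 K, ∃ w : 𝓞 K, z - p * w ∈ A := by
    intro z
    have hn0 : G.index ≠ 0 := fun h0 => hdvd (h0 ▸ dvd_zero p)
    haveI hfin : Finite ((𝓞 K) ⧸ G) := Nat.finite_of_card_ne_zero hn0
    have hcop : IsCoprime (p : ℤ) (G.index : ℤ) :=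
      Int.isCoprime_iff_gcd_eq_one.mpr (by
        simpa [Int.gcd_natCast_natCast] using (hp.coprime_iff_not_dvd.mpr hdvd))
    obtain ⟨u, v, huv⟩ := hcop
    set q : (𝓞 K) ⧸ G := QuotientAddGroup.mk z with hq
    have hcardq : (G.index : ℤ) • q = 0 := by
      rw [natCast_zsmul]
      exact card_nsmul_eq_zero'
    have hqeq : q = (p : ℤ) • (u • q) := by
      calc q = (1 : ℤ) • q := (one_zsmul q).symm
        _ = (u * p + v * G.index) • q := by rw [huv]
        _ = (u * p) • q + (v * (G.index : ℤ)) • q := add_zsmul _ _ _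
        _ = (p : ℤ) • (u • q) + v • ((G.index : ℤ) • q) := by
              rw [mul_comm u (p : ℤ), mul_zsmul, mul_zsmul]
        _ = (p : ℤ) • (u • q) := by rw [hcardq, smul_zero, add_zero]
    obtain ⟨w, hw⟩ := QuotientAddGroup.mk_surjective (u • q)
    refine ⟨w, ?_⟩
    have : QuotientAddGroup.mk (p * w) = q := by
      have : ((p : 𝓞 K) * w) = (p : ℤ) • w := by push_cast [zsmul_eq_mul]; ring
      rw [this, QuotientAddGroup.mk_zsmul, hw, ← hqeq]
    have h2 := (QuotientAddGroup.eq (s := G)).mp (this.trans hq)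
    -- h2 : -(p*w) + z ∈ G
    have : z - p * w ∈ G := by rwa [neg_add_eq_sub] at h2
    exact this
  -- Per-prime facts
  have key : ∀ (P : Ideal (𝓞 K)), P.IsPrime → (p : 𝓞 K) ∈ P → Ideal.absNorm P = p ^ κ →
      ((resPoly p P α).Monic ∧ Irreducible (resPoly p P α) ∧ (resPoly p P α).natDegree = κ) ∧
      (∀ g : ℤ[X], aeval α g ∈ P ↔ (resPoly p P α) ∣ g.map (Int.castRingHom (ZMod p))) := by
    intro P hP hmem hnorm
    haveI : P.IsPrime := hP
    have hPbot : P ≠ ⊥ := by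
      intro hbot
      rw [hbot, Ideal.absNorm_bot] at hnorm
      exact (pow_ne_zero κ hp.ne_zero) hnorm.symm
    haveI hPmax : P.IsMaximal := hP.isMaximal hPbot
    letI : Field ((𝓞 K) ⧸ P) := Ideal.Quotient.field P
    haveI : Finite ((𝓞 K) ⧸ P) := by
      rw [← Ideal.absNorm_ne_zero_iff, hnorm]
      exact pow_ne_zero κ hp.ne_zero
    haveI : CharP ((𝓞 K) ⧸ P) p := (CharP.charP_iff_prime_eq_zero hp).mpr (by
      have : ((p : 𝓞 K) : (𝓞 K) ⧸ P) = 0 := Ideal.Quotient.eq_zero_iff_mem.mpr hmem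
      simpa using this)
    letI : Algebra (ZMod p) ((𝓞 K) ⧸ P) := ZMod.algebra _ p
    set β : (𝓞 K) ⧸ P := Ideal.Quotient.mk P α with hβ
    have hres : resPoly p P α = minpoly (ZMod p) β := resPoly_def p P α
    have hcomm : ∀ g : ℤ[X],
        Ideal.Quotient.mk P (aeval α g) = aeval β (g.map (Int.castRingHom (ZMod p))) := by
      intro g
      have h1 : Ideal.Quotient.mk P (aeval α g)
          = eval₂ ((Ideal.Quotient.mk P).comp (algebraMap ℤ (𝓞 K))) β g := by
        rw [aeval_def, hom_eval₂]
      have h2 : aeval β (g.map (Int.castRingHom (ZMod p)))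
          = eval₂ ((algebraMap (ZMod p) ((𝓞 K) ⧸ P)).comp (Int.castRingHom (ZMod p))) β g := by
        rw [aeval_def, eval₂_map]
      rw [h1, h2, RingHom.ext_int ((Ideal.Quotient.mk P).comp (algebraMap ℤ (𝓞 K)))
        ((algebraMap (ZMod p) ((𝓞 K) ⧸ P)).comp (Int.castRingHom (ZMod p)))]
    have hgen : Algebra.adjoin (ZMod p) {β} = ⊤ := by
      rw [eq_top_iff]
      rintro y -
      obtain ⟨z, rfl⟩ := Ideal.Quotient.mk_surjective (I := P) y
      obtain ⟨w, hw⟩ := hsur z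
      rw [hA, Algebra.adjoin_singleton_eq_range_aeval] at hw
      obtain ⟨g, hg0⟩ := hw
      have hg : aeval α g = z - (p : 𝓞 K) * w := hg0
      have h1 : Ideal.Quotient.mk P z = Ideal.Quotient.mk P (z - p * w) := by
        rw [Ideal.Quotient.mk_eq_mk_iff_sub_mem]
        simpa using Ideal.mul_mem_right w P hmem
      rw [h1, ← hg, hcomm g]
      rw [Algebra.adjoin_singleton_eq_range_aeval]
      exact ⟨g.map (Int.castRingHom (ZMod p)), rfl⟩
    have hcard : Nat.card ((𝓞 K) ⧸ P) = p ^ κ := by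
      rw [← hnorm, Ideal.absNorm_apply, Submodule.cardQuot_apply]
    constructor
    · rw [hres]; exact minpoly_spec p κ _ hcard β hgen
    · intro g
      constructor
      · intro hgP
        rw [hres]
        apply minpoly.dvd
        rw [← hcomm g]
        exact Ideal.Quotient.eq_zero_iff_mem.mpr hgP
      · rintro ⟨c, hc⟩
        rw [← Ideal.Quotient.eq_zero_iff_mem, hcomm g, hc, map_mul]
        have h0 : aeval β (resPoly p P α) = 0 := by rw [hres]; exact minpoly.aeval _ _
        rw [h0, zero_mul]
  -- the injection from primes to polynomials
  set S := {P : Ideal (𝓞 K) // P.IsPrime ∧ (p : 𝓞 K) ∈ P ∧ Ideal.absNorm P = p ^ κ} with hS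
  set T := {f : (ZMod p)[X] // f.Monic ∧ Irreducible f ∧ f.natDegree = κ} with hT
  have hTfin : Finite T := by
    apply Finite.of_injective (fun f : T => (fun i : Fin (κ + 1) => (f : (ZMod p)[X]).coeff i))
    intro f g hfg
    apply Subtype.ext
    ext n
    rcases le_or_gt n κ with hn | hn
    · exact congrFun hfg ⟨n, Nat.lt_succ_of_le hn⟩
    · rw [coeff_eq_zero_of_natDegree_lt (f.2.2.2.symm ▸ hn),
        coeff_eq_zero_of_natDegree_lt (g.2.2.2.symm ▸ hn)]
  let Φ : S → T := fun P => ⟨resPoly p P.1 α, (key P.1 P.2.1 P.2.2.1 P.2.2.2).1⟩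
  have hΦinj : Function.Injective Φ := by
    intro P P' hPP'
    have heq : resPoly p P.1 α = resPoly p P'.1 α := congrArg Subtype.val hPP'
    obtain ⟨⟨hm, hi, hd⟩, hdvd1⟩ := key P.1 P.2.1 P.2.2.1 P.2.2.2
    obtain ⟨-, hdvd2⟩ := key P'.1 P'.2.1 P'.2.2.1 P'.2.2.2
    -- P ≤ P'
    have hle : P.1 ≤ P'.1 := by
      intro z hz
      obtain ⟨w, hw⟩ := hsur z
      rw [hA, Algebra.adjoin_singleton_eq_range_aeval] at hw
      obtain ⟨g, hg0⟩ := hw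
      have hg : aeval α g = z - (p : 𝓞 K) * w := hg0
      have hgP : aeval α g ∈ P.1 := by
        rw [hg]
        exact P.1.sub_mem hz (Ideal.mul_mem_right w P.1 P.2.2.1)
      have hgP' : aeval α g ∈ P'.1 := (hdvd2 g).mpr (heq ▸ (hdvd1 g).mp hgP)
      have : z = (z - p * w) + p * w := by ring
      rw [this, ← hg]
      exact P'.1.add_mem hgP' (Ideal.mul_mem_right w P'.1 P'.2.2.1)
    have hPbot : P.1 ≠ ⊥ := by
      intro hbot
      have := P.2.2.2
      rw [hbot, Ideal.absNorm_bot] at this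
      exact (pow_ne_zero κ hp.ne_zero) this.symm
    haveI : P.1.IsPrime := P.2.1
    exact Subtype.ext ((P.2.1.isMaximal hPbot).eq_of_le P'.2.1.ne_top hle)
  have := Nat.card_le_card_of_injective Φ hΦinj
  omega
end

section
/- A polynomial U ∈ ℤ[u₁, …, u_n] takes values divisible by the prime p for all integer values of the variables if and only if U lies in the ideal of ℤ[u₁,…,u_n] generated by p, u₁^p − u₁, …, u_n^p − u_n. -/
open MvPolynomial

private lemma monomial_reduce (p n : ℕ) (hp : 2 ≤ p) :
    ∀ e : Fin n →₀ ℕ, ∃ R : MvPolynomial (Fin n) ℤ,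
      (monomial e 1 : MvPolynomial (Fin n) ℤ) - R ∈
        Ideal.span (Set.range fun i : Fin n => (X i : MvPolynomial (Fin n) ℤ) ^ p - X i) ∧
      R ∈ restrictDegree (Fin n) ℤ (p - 1) := by
  intro e
  induction e using (measure fun e : Fin n →₀ ℕ => e.sum fun _ k => k).wf.induction with
  | _ e ih =>
  by_cases h : ∀ i, e i ≤ p - 1
  · refine ⟨monomial e 1, by simp, ?_⟩
    rw [mem_restrictDegree]
    intro s hs i
    have := MvPolynomial.support_monomial_subset hs
    simp only [Finset.mem_singleton] at this
    subst this
    exact h i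
  · push_neg at h
    obtain ⟨i, hi⟩ := h
    have hpe : p ≤ e i := by omega
    set e' : Fin n →₀ ℕ := e - Finsupp.single i p with he'
    have hsum : (e' + Finsupp.single i 1).sum (fun _ k => k) < e.sum fun _ k => k := by
      have h1 : Finsupp.single i p ≤ e := Finsupp.single_le_iff.mpr hpe
      have he : e = e' + Finsupp.single i p := by
        rw [he', tsub_add_cancel_of_le h1]
      rw [he, Finsupp.sum_add_index' (fun _ => rfl) (fun _ _ _ => rfl),
        Finsupp.sum_add_index' (fun _ => rfl) (fun _ _ _ => rfl),
        Finsupp.sum_single_index rfl, Finsupp.sum_single_index rfl]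
      omega
    obtain ⟨R, hR1, hR2⟩ := ih (e' + Finsupp.single i 1) hsum
    refine ⟨R, ?_, hR2⟩
    have key : (monomial e 1 : MvPolynomial (Fin n) ℤ)
        - monomial (e' + Finsupp.single i 1) 1 ∈
        Ideal.span (Set.range fun i : Fin n => (X i : MvPolynomial (Fin n) ℤ) ^ p - X i) := by
      have heq : (monomial e 1 : MvPolynomial (Fin n) ℤ)
          - monomial (e' + Finsupp.single i 1) 1
          = ((X i) ^ p - X i) * monomial e' 1 := by
        have h1 : (X i : MvPolynomial (Fin n) ℤ) ^ p * monomial e' 1 = monomial e 1 := by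
          rw [X_pow_eq_monomial, monomial_mul, one_mul]
          congr 1
          rw [he', add_comm, tsub_add_cancel_of_le (Finsupp.single_le_iff.mpr hpe)]
        have h2 : (X i : MvPolynomial (Fin n) ℤ) * monomial e' 1
            = monomial (e' + Finsupp.single i 1) 1 := by
          rw [← pow_one (X i), X_pow_eq_monomial, monomial_mul, one_mul, add_comm]
        rw [sub_mul, h1, h2]
      rw [heq]
      exact Ideal.mul_mem_right _ _ (Ideal.subset_span ⟨i, rfl⟩)
    have := Ideal.add_mem _ key hR1
    simpa using this

private lemma reduce_aux (p n : ℕ) (hp : 2 ≤ p) (U : MvPolynomial (Fin n) ℤ) :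
    ∃ R : MvPolynomial (Fin n) ℤ,
      U - R ∈ Ideal.span (Set.range fun i : Fin n => (X i : MvPolynomial (Fin n) ℤ) ^ p - X i) ∧
      R ∈ restrictDegree (Fin n) ℤ (p - 1) := by
  induction U using MvPolynomial.induction_on' with
  | monomial e c =>
    obtain ⟨R, h1, h2⟩ := monomial_reduce p n hp e
    refine ⟨C c * R, ?_, ?_⟩
    · have : monomial e c - C c * R = C c * (monomial e 1 - R) := by
        rw [mul_sub, C_mul_monomial, mul_one]
      rw [this]
      exact Ideal.mul_mem_left _ _ h1
    · rw [← smul_eq_C_mul]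
      exact Submodule.smul_mem _ _ h2
  | add f g hf hg =>
    obtain ⟨Rf, hf1, hf2⟩ := hf
    obtain ⟨Rg, hg1, hg2⟩ := hg
    refine ⟨Rf + Rg, ?_, add_mem hf2 hg2⟩
    have : f + g - (Rf + Rg) = (f - Rf) + (g - Rg) := by ring
    rw [this]
    exact Ideal.add_mem _ hf1 hg1

private lemma eval_mem_span_p (p n : ℕ) (hp : p.Prime) (a : Fin n → ℤ)
    (U : MvPolynomial (Fin n) ℤ)
    (hU : U ∈ Ideal.span (insert (C (p : ℤ))
      (Set.range fun i : Fin n => (X i : MvPolynomial (Fin n) ℤ) ^ p - X i))) :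
    (p : ℤ) ∣ eval a U := by
  haveI := Fact.mk hp
  have h1 : eval a U ∈ Ideal.map (eval a) (Ideal.span (insert (C (p : ℤ))
      (Set.range fun i : Fin n => (X i : MvPolynomial (Fin n) ℤ) ^ p - X i))) :=
    Ideal.mem_map_of_mem _ hU
  rw [Ideal.map_span] at h1
  have h2 : (eval a) '' (insert (C (p : ℤ))
      (Set.range fun i : Fin n => (X i : MvPolynomial (Fin n) ℤ) ^ p - X i))
      ⊆ (Ideal.span {(p : ℤ)} : Ideal ℤ) := by
    rintro x ⟨y, hy, rfl⟩
    rcases hy with rfl | ⟨i, rfl⟩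
    · simp [Ideal.mem_span_singleton]
    · simp only [map_sub, map_pow, eval_X, SetLike.mem_coe]
      rw [Ideal.mem_span_singleton]
      have : ((a i ^ p - a i : ℤ) : ZMod p) = 0 := by
        push_cast
        rw [ZMod.pow_card]
        ring
      exact_mod_cast (ZMod.intCast_zmod_eq_zero_iff_dvd _ p).mp this
  have := Ideal.span_le.mpr h2 h1
  rwa [Ideal.mem_span_singleton] at this

/-- A polynomial `U ∈ ℤ[u₁,…,uₙ]` takes values divisible by the prime `p` at all integer
points iff `U` lies in the ideal generated by `p, u₁^p−u₁, …, uₙ^p−uₙ`. -/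
theorem dvd_all_values_iff_mem_span (p : ℕ) (hp : p.Prime) (n : ℕ)
    (U : MvPolynomial (Fin n) ℤ) :
    (∀ a : Fin n → ℤ, (p : ℤ) ∣ eval a U) ↔
      U ∈ Ideal.span (insert (C (p : ℤ))
        (Set.range fun i : Fin n => (X i) ^ p - X i)) := by
  haveI := Fact.mk hp
  constructor
  · intro h
    obtain ⟨R, hUR, hRdeg⟩ := reduce_aux p n hp.two_le U
    have hJle : Ideal.span (Set.range fun i : Fin n => (X i : MvPolynomial (Fin n) ℤ) ^ p - X i)
        ≤ Ideal.span (insert (C (p : ℤ))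
          (Set.range fun i : Fin n => (X i : MvPolynomial (Fin n) ℤ) ^ p - X i)) :=
      Ideal.span_mono (Set.subset_insert _ _)
    -- p divides all values of R
    have hRval : ∀ a : Fin n → ℤ, (p : ℤ) ∣ eval a R := by
      intro a
      have h2 : (p : ℤ) ∣ eval a (U - R) :=
        eval_mem_span_p p n hp a _ (hJle hUR)
      have := h a
      have h3 : eval a R = eval a U - eval a (U - R) := by simp
      rw [h3]
      exact dvd_sub this h2
    -- map R to ZMod p vanishes everywhere, and has restricted degree
    have hmap : map (Int.castRingHom (ZMod p)) R = 0 := by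
      apply MvPolynomial.eq_zero_of_eval_eq_zero
      · intro v
        set a : Fin n → ℤ := fun j => ((v j).val : ℤ) with ha
        have hva : v = fun j => ((a j : ℤ) : ZMod p) := by
          funext j
          simp [ha, ZMod.natCast_val, ZMod.cast_id]
        have : eval v (map (Int.castRingHom (ZMod p)) R)
            = (Int.castRingHom (ZMod p)) (eval a R) := by
          rw [hva, MvPolynomial.eval_map]
          have h4 := MvPolynomial.eval₂_comp_left (Int.castRingHom (ZMod p))
            (RingHom.id ℤ) a R
          simp only [RingHom.comp_id] at h4
          rw [show (fun j => ((a j : ℤ) : ZMod p)) = (Int.castRingHom (ZMod p)) ∘ a from rfl,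
            ← h4]
          rfl
        rw [this]
        obtain ⟨c, hc⟩ := hRval a
        simp [hc]
      · rw [mem_restrictDegree] at hRdeg ⊢
        intro s hs i
        have : s ∈ R.support := MvPolynomial.support_map_subset _ _ hs
        have := hRdeg s this i
        rwa [ZMod.card]
    have hCdvd : C ((p : ℕ) : ℤ) ∣ R := (C_dvd_iff_zmod p R).mpr hmap
    obtain ⟨Q, hQ⟩ := hCdvd
    have hU : U = (U - R) + C ((p : ℕ) : ℤ) * Q := by rw [← hQ]; ring
    rw [hU]
    refine Ideal.add_mem _ (hJle hUR) ?_
    exact Ideal.mul_mem_right _ _ (Ideal.subset_span (Set.mem_insert _ _))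
  · intro hU a
    exact eval_mem_span_p p n hp a U hU
end

section
/- Let K be the cubic field defined by α³ − α² − 2α − 8 = 0 (Dedekind's field). Then 2 is a common index divisor of K: for every algebraic integer θ ∈ 𝒪_K generating K over ℚ, the index [𝒪_K : ℤ[θ]] is even. -/
open NumberField Polynomial Module

set_option synthInstance.maxHeartbeats 1000000 in
set_option maxHeartbeats 4000000 in
/-- In Dedekind's cubic field `K = ℚ(α)` with `α³ − α² − 2α − 8 = 0`, the prime `2` is a
common index divisor: every generator `θ ∈ 𝒪_K` of `K` has even index `[𝒪_K : ℤ[θ]]`. -/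
theorem two_common_index_divisor_dedekind
    (K : Type*) [Field K] [NumberField K] (α : K)
    (hα : α ^ 3 - α ^ 2 - 2 * α - 8 = 0)
    (hgen : Algebra.adjoin ℚ {α} = ⊤) :
    ∀ θ : 𝓞 K, Algebra.adjoin ℚ {(algebraMap (𝓞 K) K θ)} = ⊤ →
      2 ∣ ((Algebra.adjoin ℤ {θ}).toSubring.toAddSubgroup.index) := by
  classical
  intro θ _hθ
  by_contra h2
  ---------------------------------------------------------------- minpoly of α
  have hmin : minpoly ℚ α = X^3 - X^2 - C 2 * X - C 8 := by
    set P : ℚ[X] := X^3 - X^2 - C 2 * X - C 8 with hP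
    have hmonic : P.Monic := by unfold P; monicity!
    have hdeg : P.natDegree = 3 := by unfold P; compute_degree!
    have hroot : (Polynomial.aeval α) P = 0 := by
      simp [hP, map_ofNat]
      linear_combination hα
    have hirr : Irreducible P := by
      rw [irreducible_iff_roots_eq_zero_of_degree_le_three (by omega) (by omega)]
      rw [Multiset.eq_zero_iff_forall_notMem]
      intro q hq
      rw [mem_roots hmonic.ne_zero, IsRoot.def] at hq
      have hint : IsIntegral ℤ q := by
        refine ⟨Polynomial.X^3 - X^2 - C 2 * X - C 8, by monicity!, ?_⟩
        have h := hq
        simp [hP, eval_pow, eval_sub, eval_mul] at h ⊢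
        linear_combination h
      obtain ⟨n, rfl⟩ := IsIntegrallyClosed.isIntegral_iff.mp hint
      simp [hP, eval_pow] at hq
      have hn : n^3 - n^2 - 2*n - 8 = 0 := by exact_mod_cast hq
      have hdvd : n ∣ 8 := ⟨n^2 - n - 2, by linarith [hn]⟩
      have h1 : n ≤ 8 := Int.le_of_dvd (by norm_num) hdvd
      have h2' : -8 ≤ n := by
        have := Int.le_of_dvd (by norm_num) ((neg_dvd).mpr hdvd)
        omega
      interval_cases n <;> omega
    exact (minpoly.eq_of_irreducible_of_monic hirr hroot hmonic).symm
  ---------------------------------------------------------------- power basis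
  have hQint : IsIntegral ℚ α := ⟨X^3 - X^2 - C 2 * X - C 8, by monicity!, by
    simp [map_ofNat]; linear_combination hα⟩
  set pb : PowerBasis ℚ K := (Algebra.adjoin.powerBasis hQint).map
    ((Subalgebra.equivOfEq _ _ hgen).trans Subalgebra.topEquiv) with hpb
  have hpbgen : pb.gen = α := rfl
  have hdim : pb.dim = 3 := by
    rw [hpb]
    simp [hmin]
    compute_degree!
  have hfinrank : Module.finrank ℚ K = 3 := by rw [pb.finrank, hdim]
  set B : Basis (Fin 3) ℚ K := pb.basis.reindex (finCongr hdim) with hB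
  have hBi : ∀ i : Fin 3, B i = α ^ (i : ℕ) := by
    intro i
    rw [hB, Basis.reindex_apply, pb.basis_eq_pow, hpbgen]
    congr 1
  ---------------------------------------------------------------- traces
  have hrep : ∀ (x : K) (c : Fin 3 → ℚ), x = c 0 • B 0 + c 1 • B 1 + c 2 • B 2 →
      ∀ i, B.repr x i = c i := by
    intro x c hx i
    rw [hx]
    simp only [map_add, map_smul, Basis.repr_self, Finsupp.coe_add, Finsupp.coe_smul,
      Pi.add_apply, Pi.smul_apply, Finsupp.single_apply, smul_eq_mul]
    fin_cases i <;> simp [Fin.ext_iff]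
  have h0 : B 0 = 1 := by rw [hBi]; norm_num
  have h1 : B 1 = α := by rw [hBi]; norm_num
  have h2'' : B 2 = α ^ 2 := by rw [hBi]; norm_num
  have traceB : ∀ x : K, Algebra.trace ℚ K x =
      B.repr (x * 1) 0 + B.repr (x * α) 1 + B.repr (x * α^2) 2 := by
    intro x
    rw [Algebra.trace_eq_matrix_trace B x, Matrix.trace, Fin.sum_univ_three]
    simp only [Matrix.diag, Algebra.leftMulMatrix_eq_repr_mul, h0, h1, h2'']
  have key : ∀ (x : K) (c : Fin 3 → ℚ), (c 0 : K) + c 1 * α + c 2 * α^2 = x →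
      ∀ i, B.repr x i = c i := by
    intro x c h i
    refine hrep x c ?_ i
    rw [h0, h1, h2'', ← h, Rat.smul_def, Rat.smul_def, Rat.smul_def]
    push_cast
    ring
  have trA : Algebra.trace ℚ K α = 1 := by
    rw [traceB]
    rw [key (α * 1) ![0,1,0] (by norm_num [Matrix.cons_val_two]) 0,
        key (α * α) ![0,0,1] (by norm_num [Matrix.cons_val_two]; ring) 1,
        key (α * α^2) ![8,2,1] (by norm_num [Matrix.cons_val_two]; linear_combination -hα) 2]
    norm_num [Matrix.cons_val_two]
  have trA2 : Algebra.trace ℚ K (α^2) = 5 := by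
    rw [traceB]
    rw [key (α^2 * 1) ![0,0,1] (by norm_num [Matrix.cons_val_two]) 0,
        key (α^2 * α) ![8,2,1] (by norm_num [Matrix.cons_val_two]; linear_combination -hα) 1,
        key (α^2 * α^2) ![8,10,3] (by norm_num [Matrix.cons_val_two]; linear_combination (-α - 1) * hα) 2]
    norm_num [Matrix.cons_val_two]
  ---------------------------------------------------------------- a, b and their relations
  have haint : IsIntegral ℤ α := by
    refine ⟨X^3 - X^2 - C 2 * X - C 8, by monicity!, ?_⟩
    simp [map_ofNat]
    linear_combination hα
  have hbint : IsIntegral ℤ ((α^2 + α) / 2) := by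
    refine ⟨X^3 - C 3 * X^2 - C 10 * X - C 8, by monicity!, ?_⟩
    simp only [map_ofNat, eval₂_sub, eval₂_pow, eval₂_mul, eval₂_X, eval₂_C, eval₂_ofNat]
    push_cast
    linear_combination (1 + (3/8)*α + (1/2)*α^2 + (1/8)*α^3) * hα
  set a : 𝓞 K := ⟨α, haint⟩ with ha
  set b : 𝓞 K := ⟨(α^2 + α) / 2, hbint⟩ with hb
  have hca : algebraMap (𝓞 K) K a = α := rfl
  have hcb : algebraMap (𝓞 K) K b = (α^2 + α)/2 := rfl
  have hinj := NumberField.RingOfIntegers.coe_injective (K := K)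
  have ha2 : a^2 = 2*b - a := by
    apply hinj
    simp only [map_sub, map_add, map_mul, map_pow, map_ofNat, hca, hcb]
    ring
  have hab : a*b = 2*b + 4 := by
    apply hinj
    simp only [map_sub, map_add, map_mul, map_pow, map_ofNat, hca, hcb]
    linear_combination (1/2) * hα
  have hb2 : b^2 = 3*b + 2*a + 6 := by
    apply hinj
    simp only [map_sub, map_add, map_mul, map_pow, map_ofNat, hca, hcb]
    linear_combination (3/4 + (1/4)*α) * hα
  ---------------------------------------------------------------- cardinality of 𝓞K/2
  have hcard : Nat.card ((𝓞 K) ⧸ (Ideal.span {(2 : 𝓞 K)})) = 8 := by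
    have habs : Ideal.absNorm (Ideal.span {(2 : 𝓞 K)}) = 8 := by
      rw [Ideal.absNorm_span_singleton]
      have h2' : (2 : 𝓞 K) = algebraMap ℤ (𝓞 K) 2 := by norm_num
      rw [h2', Algebra.norm_algebraMap_of_basis (Module.Free.chooseBasis ℤ (𝓞 K))]
      have hc : Fintype.card (Module.Free.ChooseBasisIndex ℤ (𝓞 K)) = 3 := by
        rw [← Module.finrank_eq_card_chooseBasisIndex, NumberField.RingOfIntegers.rank, hfinrank]
      rw [hc]
      norm_num
    rw [← habs, Ideal.absNorm_apply, Submodule.cardQuot_apply]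
  ---------------------------------------------------------------- odd index: decomposition
  have hdec : ∀ x : 𝓞 K, ∃ w ∈ Algebra.adjoin ℤ {θ}, ∃ v : 𝓞 K, x = w + 2 * v := by
    set H := (Algebra.adjoin ℤ {θ}).toSubring.toAddSubgroup with hH
    have hne : H.index ≠ 0 := fun h => h2 (h ▸ dvd_zero 2)
    have hfin : Finite ((𝓞 K) ⧸ H) := by
      rw [AddSubgroup.index] at hne
      exact Nat.finite_of_card_ne_zero hne
    set φ : ((𝓞 K) ⧸ H) →+ ((𝓞 K) ⧸ H) := zsmulAddGroupHom 2 with hφ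
    have hinj' : Function.Injective φ := by
      rw [injective_iff_map_eq_zero]
      intro g hg
      have hg2 : (2 : ℕ) • g = 0 := by
        have h' : (2 : ℤ) • g = 0 := by simpa [hφ, zsmulAddGroupHom] using hg
        rw [two_zsmul] at h'
        rw [two_nsmul]
        exact h'
      have hord2 : addOrderOf g ∣ 2 := addOrderOf_dvd_of_nsmul_eq_zero hg2
      have hordc : addOrderOf g ∣ H.index := by
        rw [AddSubgroup.index]
        exact addOrderOf_dvd_natCard g
      have hone : addOrderOf g = 1 := by
        rcases (Nat.dvd_prime Nat.prime_two).mp hord2 with h | h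
        · exact h
        · exact absurd (h ▸ hordc) h2
      exact AddMonoid.addOrderOf_eq_one_iff.mp hone
    have hsurj : Function.Surjective φ := Finite.surjective_of_injective hinj'
    intro x
    obtain ⟨g, hg⟩ := hsurj (QuotientAddGroup.mk x)
    obtain ⟨y, rfl⟩ := QuotientAddGroup.mk_surjective g
    have hyx : ((2 * y : 𝓞 K) : (𝓞 K) ⧸ H) = QuotientAddGroup.mk x := by
      rw [← hg, hφ]
      simp only [zsmulAddGroupHom, AddMonoidHom.coe_mk, ZeroHom.coe_mk,
        ← QuotientAddGroup.mk_zsmul]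
      norm_num [two_mul]
    have hmem : x - 2 * y ∈ H := by
      rwa [eq_comm, QuotientAddGroup.eq_iff_sub_mem] at hyx
    exact ⟨x - 2*y, hmem, y, by ring⟩
  ---------------------------------------------------------------- trace-based parity
  have trpoly : ∀ (x : K) (q0 q1 q2 : ℚ),
      x = algebraMap ℚ K q0 + algebraMap ℚ K q1 * α + algebraMap ℚ K q2 * α^2 →
      Algebra.trace ℚ K x = 3*q0 + q1 + 5*q2 := by
    intro x q0 q1 q2 hx
    have hs1 : algebraMap ℚ K q1 * α = q1 • α := (Algebra.smul_def q1 α).symm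
    have hs2 : algebraMap ℚ K q2 * α^2 = q2 • α^2 := (Algebra.smul_def q2 (α^2)).symm
    rw [hx, hs1, hs2, map_add, map_add, map_smul, map_smul, Algebra.trace_algebraMap, trA, trA2,
      hfinrank]
    simp [smul_eq_mul]
    ring
  have trint : ∀ z : 𝓞 K, ∃ m : ℤ, Algebra.trace ℚ K (algebraMap (𝓞 K) K z) = (m : ℚ) := by
    intro z
    have hii : IsIntegral ℤ (algebraMap (𝓞 K) K z) := z.2
    have hit := Algebra.isIntegral_trace (L := ℚ) (F := K) (R := ℤ) hii
    obtain ⟨m, hm⟩ := IsIntegrallyClosed.isIntegral_iff.mp hit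
    exact ⟨m, by rw [← hm]; simp [eq_comm]⟩
  have hevenK : ∀ (d0 d1 d2 : ℤ) (v : 𝓞 K),
      ((d0 : K) + (d1 : K) * α + (d2 : K) * ((α^2+α)/2) = 2 * algebraMap (𝓞 K) K v) →
      (2 ∣ d0 ∧ 2 ∣ d1 ∧ 2 ∣ d2) := by
    intro d0 d1 d2 v hv
    obtain ⟨m1, hm1⟩ := trint v
    obtain ⟨m2, hm2⟩ := trint (a * v)
    obtain ⟨m3, hm3⟩ := trint (b * v)
    set vK := algebraMap (𝓞 K) K v with hvK
    have hav : algebraMap (𝓞 K) K (a * v) = α * vK := by rw [map_mul, hca]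
    have hbv : algebraMap (𝓞 K) K (b * v) = ((α^2+α)/2) * vK := by rw [map_mul, hcb]
    have tr2 : ∀ x : K, Algebra.trace ℚ K (2 * x) = 2 * Algebra.trace ℚ K x := by
      intro x
      have hsm : (2 : K) * x = (2 : ℚ) • x := by
        rw [Rat.smul_def]; push_cast; ring
      rw [hsm, map_smul, smul_eq_mul]
    have e1 : 2 * (m1 : ℚ) = 3*(d0:ℚ) + d1 + 3*d2 := by
      have h := trpoly (2 * vK) (d0 : ℚ) ((d1 : ℚ) + (d2 : ℚ)/2) ((d2 : ℚ)/2)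
        (by simp only [eq_ratCast]; push_cast; linear_combination -hv)
      rw [tr2, hm1] at h
      rw [h]; ring
    have e2 : 2 * (m2 : ℚ) = (d0:ℚ) + 5*d1 + 18*d2 := by
      have h := trpoly (2 * (α * vK)) (4*(d2:ℚ)) ((d0 : ℚ) + d2) ((d1 : ℚ) + d2)
        (by simp only [eq_ratCast]; push_cast;
            linear_combination (-α)*hv + ((d2:K)/2)*hα)
      rw [tr2, ← hav, hm2] at h
      rw [h]; ring
    have e3 : 2 * (m3 : ℚ) = 3*(d0:ℚ) + 18*d1 + 29*d2 := by
      have h := trpoly (2 * (((α^2+α)/2) * vK)) (4*(d1:ℚ) + 6*d2)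
        ((d0 : ℚ)/2 + d1 + 7*(d2:ℚ)/2) ((d0 : ℚ)/2 + d1 + 3*(d2:ℚ)/2)
        (by simp only [eq_ratCast]; push_cast;
            linear_combination (-(α^2+α)/2)*hv + ((d1:K)/2 + (d2:K)*(3 + α)/4)*hα)
      rw [tr2, ← hbv, hm3] at h
      rw [h]; ring
    have z1 : 2 * m1 = 3*d0 + d1 + 3*d2 := by exact_mod_cast e1
    have z2 : 2 * m2 = d0 + 5*d1 + 18*d2 := by exact_mod_cast e2
    have z3 : 2 * m3 = 3*d0 + 18*d1 + 29*d2 := by exact_mod_cast e3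
    refine ⟨?_, ?_, ?_⟩ <;> omega
  have heven : ∀ (d0 d1 d2 : ℤ) (v : 𝓞 K),
      ((d0 : 𝓞 K) + (d1 : 𝓞 K)*a + (d2 : 𝓞 K)*b = 2*v) → (2 ∣ d0 ∧ 2 ∣ d1 ∧ 2 ∣ d2) := by
    intro d0 d1 d2 v hv
    refine hevenK d0 d1 d2 v ?_
    have := congrArg (algebraMap (𝓞 K) K) hv
    simp only [map_add, map_mul, map_intCast, map_ofNat, hca, hcb] at this
    exact this
  ---------------------------------------------------------------- final contradiction
  set I : Ideal (𝓞 K) := Ideal.span {(2 : 𝓞 K)} with hI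
  set π : 𝓞 K →+* (𝓞 K) ⧸ I := Ideal.Quotient.mk I with hπ
  have hfinQ : Finite ((𝓞 K) ⧸ I) := Nat.finite_of_card_ne_zero (by rw [hcard]; norm_num)
  have hfty : Fintype ((𝓞 K) ⧸ I) := Fintype.ofFinite _
  set g : Fin 2 × Fin 2 × Fin 2 → (𝓞 K) ⧸ I := fun c =>
    π (((c.1 : ℕ) : 𝓞 K) + ((c.2.1 : ℕ) : 𝓞 K) * a + ((c.2.2 : ℕ) : 𝓞 K) * b) with hg
  have ginj : Function.Injective g := by
    intro c c' h
    rw [hg] at h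
    simp only at h
    have hsub := Ideal.Quotient.eq.mp h
    obtain ⟨v, hv⟩ := Ideal.mem_span_singleton'.mp hsub
    set d0 : ℤ := ((c.1 : ℕ) : ℤ) - ((c'.1 : ℕ) : ℤ) with hd0
    set d1 : ℤ := ((c.2.1 : ℕ) : ℤ) - ((c'.2.1 : ℕ) : ℤ) with hd1
    set d2 : ℤ := ((c.2.2 : ℕ) : ℤ) - ((c'.2.2 : ℕ) : ℤ) with hd2
    have heq : (d0 : 𝓞 K) + (d1 : 𝓞 K)*a + (d2 : 𝓞 K)*b = 2*v := by
      rw [hd0, hd1, hd2]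
      push_cast
      linear_combination -hv
    obtain ⟨hh1, hh2, hh3⟩ := heven _ _ _ v heq
    rw [hd0] at hh1; rw [hd1] at hh2; rw [hd2] at hh3
    have b1 : (c.1 : ℕ) < 2 := c.1.isLt
    have b2 : (c.2.1 : ℕ) < 2 := c.2.1.isLt
    have b3 : (c.2.2 : ℕ) < 2 := c.2.2.isLt
    have b1' : (c'.1 : ℕ) < 2 := c'.1.isLt
    have b2' : (c'.2.1 : ℕ) < 2 := c'.2.1.isLt
    have b3' : (c'.2.2 : ℕ) < 2 := c'.2.2.isLt
    have hqq : (c.1 : ℕ) = (c'.1 : ℕ) ∧ (c.2.1 : ℕ) = (c'.2.1 : ℕ) ∧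
        (c.2.2 : ℕ) = (c'.2.2 : ℕ) := by omega
    obtain ⟨q1, q2, q3⟩ := hqq
    exact Prod.ext (Fin.ext q1) (Prod.ext (Fin.ext q2) (Fin.ext q3))
  have gsurj : Function.Surjective g := by
    have hbij : Function.Bijective g := by
      rw [Fintype.bijective_iff_injective_and_card]
      refine ⟨ginj, ?_⟩
      rw [← Nat.card_eq_fintype_card, ← Nat.card_eq_fintype_card, hcard]
      simp [Nat.card_eq_fintype_card]
    exact hbij.2
  obtain ⟨c, hc⟩ := gsurj (π θ)
  rw [hg] at hc; simp only at hc
  have hsub := Ideal.Quotient.eq.mp hc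
  obtain ⟨y, hy⟩ := Ideal.mem_span_singleton'.mp hsub
  set e0 : 𝓞 K := ((c.1 : ℕ) : 𝓞 K) with he0def
  set e1 : 𝓞 K := ((c.2.1 : ℕ) : 𝓞 K) with he1def
  set e2 : 𝓞 K := ((c.2.2 : ℕ) : 𝓞 K) with he2def
  set y0 : 𝓞 K := -y with hy0def
  have hθeq : θ = e0 + e1*a + e2*b + 2*y0 := by
    rw [hy0def]
    linear_combination hy
  have hesq : ∀ i : Fin 2, ((i : ℕ) : 𝓞 K)^2 = ((i : ℕ) : 𝓞 K) := by
    intro i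
    fin_cases i <;> norm_num
  have he0 : e0^2 = e0 := hesq c.1
  have he1 : e1^2 = e1 := hesq c.2.1
  have he2 : e2^2 = e2 := hesq c.2.2
  set t : (𝓞 K) ⧸ I := π θ with ht_def
  have h2Q : (2 : (𝓞 K) ⧸ I) = 0 := by
    have h := Ideal.Quotient.eq_zero_iff_mem.mpr (Ideal.mem_span_singleton_self (2 : 𝓞 K))
    rw [show ((Ideal.Quotient.mk (Ideal.span {(2 : 𝓞 K)})) (2 : 𝓞 K))
      = (2 : (𝓞 K) ⧸ Ideal.span {(2 : 𝓞 K)}) from map_ofNat _ 2] at h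
    exact h
  have ht : t*t = t := by
    have hidem : θ^2 - θ ∈ I := by
      rw [hI, Ideal.mem_span_singleton']
      refine ⟨e1*(b - a) + e2*(b + a + 3) + e0*e1*a + e0*e2*b + e1*e2*(2*b+4)
        + 2*(e0+e1*a+e2*b)*y0 + 2*y0^2 - y0, ?_⟩
      rw [hθeq]
      linear_combination -(he0 + a^2*he1 + b^2*he2 + e1*ha2 + e2*hb2 + 2*e1*e2*hab)
    have h0 := Ideal.Quotient.eq_zero_iff_mem.mpr hidem
    have hmap : (Ideal.Quotient.mk I) (θ^2 - θ) = t*t - t := by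
      rw [map_sub, map_pow, ht_def, hπ]
      ring
    rw [hmap] at h0
    linear_combination h0
  have hrange : ∀ w ∈ Algebra.adjoin ℤ ({θ} : Set (𝓞 K)), ∃ n m : ℤ,
      π w = (n : (𝓞 K) ⧸ I) + (m : (𝓞 K) ⧸ I) * t := by
    intro w hw
    induction hw using Algebra.adjoin_induction with
    | mem x hx =>
      rw [Set.mem_singleton_iff] at hx
      exact ⟨0, 1, by rw [hx, ht_def]; push_cast; ring⟩
    | algebraMap r =>
      refine ⟨r, 0, ?_⟩
      have hr : algebraMap ℤ (𝓞 K) r = ((r : ℤ) : 𝓞 K) := rfl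
      rw [hr, map_intCast]
      push_cast
      ring
    | add x y hx hy ihx ihy =>
      obtain ⟨n1, m1, hh1⟩ := ihx
      obtain ⟨n2, m2, hh2⟩ := ihy
      exact ⟨n1 + n2, m1 + m2, by rw [map_add, hh1, hh2]; push_cast; ring⟩
    | mul x y hx hy ihx ihy =>
      obtain ⟨n1, m1, hh1⟩ := ihx
      obtain ⟨n2, m2, hh2⟩ := ihy
      refine ⟨n1*n2, n1*m2 + n2*m1 + m1*m2, ?_⟩
      rw [map_mul, hh1, hh2]
      push_cast
      linear_combination ((m1 : (𝓞 K) ⧸ I) * m2) * ht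
  set f4 : Fin 4 → (𝓞 K) ⧸ I := ![0, 1, t, 1+t] with hf4
  have f4surj : Function.Surjective f4 := by
    intro q
    obtain ⟨x, hx⟩ := Ideal.Quotient.mk_surjective (I := I) q
    obtain ⟨w, hw, v, hxeq⟩ := hdec x
    obtain ⟨n, m, hnm⟩ := hrange w hw
    have hq : q = ((n % 2 : ℤ) : (𝓞 K) ⧸ I) + ((m % 2 : ℤ) : (𝓞 K) ⧸ I) * t := by
      have hx2 : q = π w := by
        rw [← hx, hπ, hxeq, map_add, map_mul]
        have h2c : (Ideal.Quotient.mk I) (2 : 𝓞 K) = 0 := by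
          rw [show ((Ideal.Quotient.mk I) (2 : 𝓞 K)) = (2 : (𝓞 K) ⧸ I) from map_ofNat _ 2, h2Q]
        rw [h2c, zero_mul, add_zero]
      have hcast : ∀ k : ℤ, ((k : ℤ) : (𝓞 K) ⧸ I) = ((k % 2 : ℤ) : (𝓞 K) ⧸ I) := by
        intro k
        conv_lhs => rw [show k = 2*(k/2) + k % 2 from (Int.mul_ediv_add_emod k 2).symm]
        push_cast
        rw [h2Q]
        ring
      rw [hx2, hnm, hcast n, hcast m]
    have hn2 := Int.emod_two_eq_zero_or_one n
    have hm2 := Int.emod_two_eq_zero_or_one m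
    rcases hn2 with hn2 | hn2 <;> rcases hm2 with hm2 | hm2
    · exact ⟨0, by rw [hq, hn2, hm2, hf4]; norm_num⟩
    · exact ⟨2, by rw [hq, hn2, hm2, hf4]; norm_num [Matrix.cons_val_two]⟩
    · exact ⟨1, by rw [hq, hn2, hm2, hf4]; norm_num⟩
    · exact ⟨3, by rw [hq, hn2, hm2, hf4]; norm_num [Matrix.cons_val_three]⟩
  have hle : Nat.card ((𝓞 K) ⧸ I) ≤ 4 := by
    have h4 := Nat.card_le_card_of_surjective f4 f4surj
    simpa using h4
  rw [hcard] at hle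
  norm_num at hle
end
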